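/- The ℤ-linear map ψ⋆ : Pic → Pic preserves the intersection form: for all C, C′ ∈ Pic, ψ⋆(C) • ψ⋆(C′) = C • C′. -/
import Mathlib


/-- The Picard lattice `Pic` of the blown-up surface: the free `ℤ`-module of rank 10 with basis
`H_x, H_y, F₁, …, F₈`. -/
abbrev Pic : Type := Fin 10 → ℤ

/-- The `i`-th basis vector of `Pic`. -/
def bv (i : Fin 10) : Pic := fun j => if j = i then 1 else 0

/-- The class `H_x` of a vertical line. -/
def Hx : Pic := bv 0

/-- The class `H_y` of a horizontal line. -/
def Hy : Pic := bv 1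

/-- The class `F (k)` of the exceptional divisor `F_{k+1}` (so `F 0 = F₁`, …, `F 7 = F₈`). -/
def F (k : Fin 8) : Pic := bv ⟨k.val + 2, by omega⟩

/-- The intersection form on `Pic`: `H_x•H_x = H_y•H_y = 0`, `H_x•H_y = 1`,
`H_x•F_i = H_y•F_i = 0`, `F_i•F_j = −δ_{ij}`. -/
def inter (v w : Pic) : ℤ :=
  v 0 * w 1 + v 1 * w 0 - ∑ k : Fin 8, v ⟨k.val + 2, by omega⟩ * w ⟨k.val + 2, by omega⟩

theorem sum_univ_ten (f : Fin 10 → ℤ) :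
    ∑ i, f i = f 0 + f 1 + f 2 + f 3 + f 4 + f 5 + f 6 + f 7 + f 8 + f 9 := by
  rw [Fin.sum_univ_castSucc, Fin.sum_univ_castSucc, Fin.sum_univ_eight]; rfl

theorem idx0 : (⟨(0 : Fin 8).val + 2, by omega⟩ : Fin 10) = 2 := rfl
theorem idx1 : (⟨(1 : Fin 8).val + 2, by omega⟩ : Fin 10) = 3 := rfl
theorem idx2 : (⟨(2 : Fin 8).val + 2, by omega⟩ : Fin 10) = 4 := rfl
theorem idx3 : (⟨(3 : Fin 8).val + 2, by omega⟩ : Fin 10) = 5 := rfl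
theorem idx4 : (⟨(4 : Fin 8).val + 2, by omega⟩ : Fin 10) = 6 := rfl
theorem idx5 : (⟨(5 : Fin 8).val + 2, by omega⟩ : Fin 10) = 7 := rfl
theorem idx6 : (⟨(6 : Fin 8).val + 2, by omega⟩ : Fin 10) = 8 := rfl
theorem idx7 : (⟨(7 : Fin 8).val + 2, by omega⟩ : Fin 10) = 9 := rfl

theorem inter_eq (v w : Pic) : inter v w =
    v 0 * w 1 + v 1 * w 0 - (v 2 * w 2 + v 3 * w 3 + v 4 * w 4 + v 5 * w 5
      + v 6 * w 6 + v 7 * w 7 + v 8 * w 8 + v 9 * w 9) := by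
  simp only [inter, Fin.sum_univ_eight, idx0, idx1, idx2, idx3, idx4, idx5, idx6, idx7]

set_option maxHeartbeats 2000000

/-- The `ℤ`-linear map `ψ⋆ : Pic → Pic` induced by the composed forward map of
the Laguerre-weight recurrence (defined on the basis as in Lemma 3 of the paper) preserves the
intersection form. -/
theorem psiStar_preserves_intersection (ψ : Pic →ₗ[ℤ] Pic)
    (hHx : ψ Hx = (5 : ℤ) • Hx + (2 : ℤ) • Hy - F 0 - F 1
      - (2 : ℤ) • (F 2 + F 3 + F 4 + F 5) - F 6 - F 7)
    (hHy : ψ Hy = (2 : ℤ) • Hx + Hy - (F 2 + F 3 + F 4 + F 5))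
    (hF1 : ψ (F 0) = (2 : ℤ) • Hx + Hy - F 1 - (F 2 + F 3 + F 4 + F 5))
    (hF2 : ψ (F 1) = (2 : ℤ) • Hx + Hy - F 0 - (F 2 + F 3 + F 4 + F 5))
    (hF3 : ψ (F 2) = Hx - F 5)
    (hF4 : ψ (F 3) = Hx - F 4)
    (hF5 : ψ (F 4) = Hx - F 3)
    (hF6 : ψ (F 5) = Hx - F 2)
    (hF7 : ψ (F 6) = (2 : ℤ) • Hx + Hy - (F 2 + F 3 + F 4 + F 5) - F 7)
    (hF8 : ψ (F 7) = (2 : ℤ) • Hx + Hy - (F 2 + F 3 + F 4 + F 5) - F 6) :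
    ∀ C C' : Pic, inter (ψ C) (ψ C') = inter C C' := by
  have hdec : ∀ C : Pic, ψ C = ∑ i : Fin 10, C i • ψ (bv i) := by
    intro C
    have h : C = ∑ i : Fin 10, C i • bv i := by
      funext j
      rw [Finset.sum_apply]
      simp [bv, Pi.smul_apply, smul_eq_mul, mul_ite, Finset.sum_ite_eq]
    conv_lhs => rw [h]
    rw [map_sum]
    exact Finset.sum_congr rfl fun i _ => map_smul ψ _ _
  have app : ∀ (D : Pic) (j : Fin 10), ψ D j = ∑ i : Fin 10, D i * ψ (bv i) j := by
    intro D j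
    rw [hdec D, Finset.sum_apply]
    rfl
  have h0 : ψ (bv 0) = _ := hHx
  have h1 : ψ (bv 1) = _ := hHy
  have h2 : ψ (bv 2) = _ := hF1
  have h3 : ψ (bv 3) = _ := hF2
  have h4 : ψ (bv 4) = _ := hF3
  have h5 : ψ (bv 5) = _ := hF4
  have h6 : ψ (bv 6) = _ := hF5
  have h7 : ψ (bv 7) = _ := hF6
  have h8 : ψ (bv 8) = _ := hF7
  have h9 : ψ (bv 9) = _ := hF8
  have a0 : ∀ D : Pic, ψ D 0 = 5 * D 0 + 2 * D 1 + 2 * D 2 + 2 * D 3 + D 4 + D 5 + D 6 + D 7 + 2 * D 8 + 2 * D 9:= by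
    intro D; rw [app, sum_univ_ten]
    simp only [h0, h1, h2, h3, h4, h5, h6, h7, h8, h9, Hx, Hy, F,
      idx0, idx1, idx2, idx3, idx4, idx5, idx6, idx7, Pi.add_apply, Pi.sub_apply,
      Pi.smul_apply, smul_eq_mul, bv]
    simp only [Fin.reduceEq, reduceIte]
    ring
  have a1 : ∀ D : Pic, ψ D 1 = 2 * D 0 + D 1 + D 2 + D 3 + D 8 + D 9:= by
    intro D; rw [app, sum_univ_ten]
    simp only [h0, h1, h2, h3, h4, h5, h6, h7, h8, h9, Hx, Hy, F,
      idx0, idx1, idx2, idx3, idx4, idx5, idx6, idx7, Pi.add_apply, Pi.sub_apply,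
      Pi.smul_apply, smul_eq_mul, bv]
    simp only [Fin.reduceEq, reduceIte]
    ring
  have a2 : ∀ D : Pic, ψ D 2 = -D 0 - D 3:= by
    intro D; rw [app, sum_univ_ten]
    simp only [h0, h1, h2, h3, h4, h5, h6, h7, h8, h9, Hx, Hy, F,
      idx0, idx1, idx2, idx3, idx4, idx5, idx6, idx7, Pi.add_apply, Pi.sub_apply,
      Pi.smul_apply, smul_eq_mul, bv]
    simp only [Fin.reduceEq, reduceIte]
    ring
  have a3 : ∀ D : Pic, ψ D 3 = -D 0 - D 2:= by
    intro D; rw [app, sum_univ_ten]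
    simp only [h0, h1, h2, h3, h4, h5, h6, h7, h8, h9, Hx, Hy, F,
      idx0, idx1, idx2, idx3, idx4, idx5, idx6, idx7, Pi.add_apply, Pi.sub_apply,
      Pi.smul_apply, smul_eq_mul, bv]
    simp only [Fin.reduceEq, reduceIte]
    ring
  have a4 : ∀ D : Pic, ψ D 4 = -2 * D 0 - D 1 - D 2 - D 3 - D 7 - D 8 - D 9:= by
    intro D; rw [app, sum_univ_ten]
    simp only [h0, h1, h2, h3, h4, h5, h6, h7, h8, h9, Hx, Hy, F,
      idx0, idx1, idx2, idx3, idx4, idx5, idx6, idx7, Pi.add_apply, Pi.sub_apply,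
      Pi.smul_apply, smul_eq_mul, bv]
    simp only [Fin.reduceEq, reduceIte]
    ring
  have a5 : ∀ D : Pic, ψ D 5 = -2 * D 0 - D 1 - D 2 - D 3 - D 6 - D 8 - D 9:= by
    intro D; rw [app, sum_univ_ten]
    simp only [h0, h1, h2, h3, h4, h5, h6, h7, h8, h9, Hx, Hy, F,
      idx0, idx1, idx2, idx3, idx4, idx5, idx6, idx7, Pi.add_apply, Pi.sub_apply,
      Pi.smul_apply, smul_eq_mul, bv]
    simp only [Fin.reduceEq, reduceIte]
    ring
  have a6 : ∀ D : Pic, ψ D 6 = -2 * D 0 - D 1 - D 2 - D 3 - D 5 - D 8 - D 9:= by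
    intro D; rw [app, sum_univ_ten]
    simp only [h0, h1, h2, h3, h4, h5, h6, h7, h8, h9, Hx, Hy, F,
      idx0, idx1, idx2, idx3, idx4, idx5, idx6, idx7, Pi.add_apply, Pi.sub_apply,
      Pi.smul_apply, smul_eq_mul, bv]
    simp only [Fin.reduceEq, reduceIte]
    ring
  have a7 : ∀ D : Pic, ψ D 7 = -2 * D 0 - D 1 - D 2 - D 3 - D 4 - D 8 - D 9:= by
    intro D; rw [app, sum_univ_ten]
    simp only [h0, h1, h2, h3, h4, h5, h6, h7, h8, h9, Hx, Hy, F,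
      idx0, idx1, idx2, idx3, idx4, idx5, idx6, idx7, Pi.add_apply, Pi.sub_apply,
      Pi.smul_apply, smul_eq_mul, bv]
    simp only [Fin.reduceEq, reduceIte]
    ring
  have a8 : ∀ D : Pic, ψ D 8 = -D 0 - D 9:= by
    intro D; rw [app, sum_univ_ten]
    simp only [h0, h1, h2, h3, h4, h5, h6, h7, h8, h9, Hx, Hy, F,
      idx0, idx1, idx2, idx3, idx4, idx5, idx6, idx7, Pi.add_apply, Pi.sub_apply,
      Pi.smul_apply, smul_eq_mul, bv]
    simp only [Fin.reduceEq, reduceIte]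
    ring
  have a9 : ∀ D : Pic, ψ D 9 = -D 0 - D 8:= by
    intro D; rw [app, sum_univ_ten]
    simp only [h0, h1, h2, h3, h4, h5, h6, h7, h8, h9, Hx, Hy, F,
      idx0, idx1, idx2, idx3, idx4, idx5, idx6, idx7, Pi.add_apply, Pi.sub_apply,
      Pi.smul_apply, smul_eq_mul, bv]
    simp only [Fin.reduceEq, reduceIte]
    ring
  intro C C'
  rw [inter_eq (ψ C) (ψ C'), inter_eq C C',
    a0 C, a1 C, a2 C, a3 C, a4 C, a5 C, a6 C, a7 C, a8 C, a9 C,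
    a0 C', a1 C', a2 C', a3 C', a4 C', a5 C', a6 C', a7 C', a8 C', a9 C']
  ring
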